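/- Let α > −1/2 and for x, y, z ∈ ℝ* satisfying ||x|−|y|| < |z| < |x|+|y| define K_ε = ε^{2α+2} K_{α,α}(εx, εy, εz), where K_{α,α}(x,y,z) = 2^{4α+2} M e^{x+y−z} [sinh(x+y+z) sinh(−x+y+z) sinh(x−y+z) sinh(x+y−z)]^{α−1/2} / |sinh 2x sinh 2y sinh 2z|^{2α} · [sinh(x+y+z) sinh(−x+y+z) sinh(x−y+z)] / (sinh 2x sinh 2y sinh 2z), with M = Γ(α+1)/(√π Γ(α+1/2)). Then lim_{ε→0} K_ε = k_α(x,y,z), where k_α(x,y,z) = 2^{−2α−1} M [(x+y+z)(−x+y+z)(x−y+z)(x+y−z)]^{α−1/2} / |xyz|^{2α} · (x+y+z)(−x+y+z)(x−y+z)/(xyz). -/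

import Mathlib

open Filter

noncomputable def Malpha (α : ℝ) : ℝ :=
  Real.Gamma (α + 1) / (Real.sqrt Real.pi * Real.Gamma (α + 1/2))

noncomputable def Kaa (α x y z : ℝ) : ℝ :=
  (2 : ℝ) ^ (4 * α + 2) * Malpha α * Real.exp (x + y - z) *
    (Real.sinh (x + y + z) * Real.sinh (-x + y + z) * Real.sinh (x - y + z) *
        Real.sinh (x + y - z)) ^ (α - 1/2) /
      |Real.sinh (2 * x) * Real.sinh (2 * y) * Real.sinh (2 * z)| ^ (2 * α) *
    (Real.sinh (x + y + z) * Real.sinh (-x + y + z) * Real.sinh (x - y + z) /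
      (Real.sinh (2 * x) * Real.sinh (2 * y) * Real.sinh (2 * z)))

noncomputable def kRat (α x y z : ℝ) : ℝ :=
  (2 : ℝ) ^ (-2 * α - 1) * Malpha α *
    ((x + y + z) * (-x + y + z) * (x - y + z) * (x + y - z)) ^ (α - 1/2) /
      |x * y * z| ^ (2 * α) *
    ((x + y + z) * (-x + y + z) * (x - y + z) / (x * y * z))

lemma tendsto_sinh_div (c : ℝ) :
    Tendsto (fun ε : ℝ => Real.sinh (ε * c) / ε) (nhdsWithin 0 (Set.Ioi 0)) (nhds c) := by
  have h : HasDerivAt (fun t : ℝ => Real.sinh (t * c)) c 0 := by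
    have h1 : HasDerivAt (fun t : ℝ => t * c) (1 * c) 0 := (hasDerivAt_id 0).mul_const c
    simpa using h1.sinh
  have h2 := hasDerivAt_iff_tendsto_slope.mp h
  have h3 : Tendsto (slope (fun t : ℝ => Real.sinh (t * c)) 0)
      (nhdsWithin 0 (Set.Ioi 0)) (nhds c) :=
    h2.mono_left (nhdsWithin_mono 0 (fun u hu => Set.mem_compl_singleton_iff.mpr (ne_of_gt hu)))
  refine h3.congr fun ε => ?_
  simp [slope_def_field]

lemma sinh_prod_pos {ε A B C D : ℝ} (hε : 0 < ε) (h : 0 < A * B * C * D) :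
    0 < Real.sinh (ε * A) * Real.sinh (ε * B) * Real.sinh (ε * C) * Real.sinh (ε * D) := by
  have sgn : ∀ u : ℝ, u ≠ 0 → 0 < Real.sinh (ε * u) * u := by
    intro u hu
    rcases hu.lt_or_gt with h' | h'
    · exact mul_pos_of_neg_of_neg (Real.sinh_neg_iff.mpr (mul_neg_of_pos_of_neg hε h')) h'
    · exact mul_pos (Real.sinh_pos_iff.mpr (mul_pos hε h')) h'
  have hA : A ≠ 0 := by rintro rfl; simp at h
  have hB : B ≠ 0 := by rintro rfl; simp at h
  have hC : C ≠ 0 := by rintro rfl; simp at h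
  have hD : D ≠ 0 := by rintro rfl; simp at h
  have h4 := mul_pos (mul_pos (mul_pos (sgn A hA) (sgn B hB)) (sgn C hC)) (sgn D hD)
  by_contra hle
  push_neg at hle
  nlinarith [h4, h, hle]

lemma scaled_eq (α : ℝ) {ε x y z : ℝ} (hε : 0 < ε)
    (hx : x ≠ 0) (hy : y ≠ 0) (hz : z ≠ 0)
    (habcd : 0 < (x + y + z) * (-x + y + z) * (x - y + z) * (x + y - z)) :
    ε ^ (2 * α + 2) * Kaa α (ε * x) (ε * y) (ε * z) =
    (2 : ℝ) ^ (4 * α + 2) * Malpha α * Real.exp (ε * (x + y - z)) *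
      (Real.sinh (ε * (x + y + z)) / ε * (Real.sinh (ε * (-x + y + z)) / ε) *
        (Real.sinh (ε * (x - y + z)) / ε) * (Real.sinh (ε * (x + y - z)) / ε)) ^ (α - 1/2) /
      |Real.sinh (ε * (2 * x)) / ε * (Real.sinh (ε * (2 * y)) / ε) *
        (Real.sinh (ε * (2 * z)) / ε)| ^ (2 * α) *
      (Real.sinh (ε * (x + y + z)) / ε * (Real.sinh (ε * (-x + y + z)) / ε) *
        (Real.sinh (ε * (x - y + z)) / ε) /
        (Real.sinh (ε * (2 * x)) / ε * (Real.sinh (ε * (2 * y)) / ε) *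
          (Real.sinh (ε * (2 * z)) / ε))) := by
  have hX : Real.sinh (ε * (2 * x)) ≠ 0 :=
    Real.sinh_ne_zero.mpr (mul_ne_zero hε.ne' (mul_ne_zero two_ne_zero hx))
  have hY : Real.sinh (ε * (2 * y)) ≠ 0 :=
    Real.sinh_ne_zero.mpr (mul_ne_zero hε.ne' (mul_ne_zero two_ne_zero hy))
  have hZ : Real.sinh (ε * (2 * z)) ≠ 0 :=
    Real.sinh_ne_zero.mpr (mul_ne_zero hε.ne' (mul_ne_zero two_ne_zero hz))
  have hP : 0 < Real.sinh (ε * (x + y + z)) * Real.sinh (ε * (-x + y + z)) *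
      Real.sinh (ε * (x - y + z)) * Real.sinh (ε * (x + y - z)) := sinh_prod_pos hε habcd
  simp only [Kaa]
  rw [show ε * x + ε * y + ε * z = ε * (x + y + z) from by ring,
    show -(ε * x) + ε * y + ε * z = ε * (-x + y + z) from by ring,
    show ε * x - ε * y + ε * z = ε * (x - y + z) from by ring,
    show ε * x + ε * y - ε * z = ε * (x + y - z) from by ring,
    show 2 * (ε * x) = ε * (2 * x) from by ring,
    show 2 * (ε * y) = ε * (2 * y) from by ring,
    show 2 * (ε * z) = ε * (2 * z) from by ring]
  set S1 := Real.sinh (ε * (x + y + z))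
  set S2 := Real.sinh (ε * (-x + y + z))
  set S3 := Real.sinh (ε * (x - y + z))
  set S4 := Real.sinh (ε * (x + y - z))
  set X := Real.sinh (ε * (2 * x))
  set Y := Real.sinh (ε * (2 * y))
  set Z := Real.sinh (ε * (2 * z))
  have r1 : S1 / ε * (S2 / ε) * (S3 / ε) * (S4 / ε) = S1 * S2 * S3 * S4 / ε ^ 4 := by ring
  have r2 : (S1 * S2 * S3 * S4 / ε ^ 4) ^ (α - 1/2) =
      (S1 * S2 * S3 * S4) ^ (α - 1/2) / ε ^ (4 * α - 2) := by
    rw [Real.div_rpow hP.le (by positivity)]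
    congr 1
    rw [← Real.rpow_natCast ε 4, ← Real.rpow_mul hε.le]
    congr 1
    push_cast
    ring
  have r3 : |X / ε * (Y / ε) * (Z / ε)| = |X * Y * Z| / ε ^ 3 := by
    rw [show X / ε * (Y / ε) * (Z / ε) = X * Y * Z / ε ^ 3 from by ring, abs_div,
      abs_of_pos (by positivity : (0:ℝ) < ε ^ 3)]
  have r4 : (|X * Y * Z| / ε ^ 3) ^ (2 * α) = |X * Y * Z| ^ (2 * α) / ε ^ (6 * α) := by
    rw [Real.div_rpow (abs_nonneg _) (by positivity)]
    congr 1
    rw [← Real.rpow_natCast ε 3, ← Real.rpow_mul hε.le]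
    congr 1
    push_cast
    ring
  have r5 : ε ^ (6 * α) = ε ^ (2 * α + 2) * ε ^ (4 * α - 2) := by
    rw [← Real.rpow_add hε]
    congr 1
    ring
  rw [r1, r2, r3, r4, r5]
  have h1 : ε ^ (4 * α - 2) ≠ 0 := (Real.rpow_pos_of_pos hε _).ne'
  have h2 : ε ^ (2 * α + 2) ≠ 0 := (Real.rpow_pos_of_pos hε _).ne'
  have h3 : |X * Y * Z| ^ (2 * α) ≠ 0 :=
    (Real.rpow_pos_of_pos (abs_pos.mpr (mul_ne_zero (mul_ne_zero hX hY) hZ)) _).ne'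
  field_simp

theorem kernel_rational_limit (α x y z : ℝ) (hα : α > -(1/2))
    (hx : x ≠ 0) (hy : y ≠ 0) (hz : z ≠ 0)
    (h1 : abs (|x| - |y|) < |z|) (h2 : |z| < |x| + |y|) :
    Tendsto (fun ε : ℝ => ε ^ (2 * α + 2) * Kaa α (ε * x) (ε * y) (ε * z))
      (nhdsWithin 0 (Set.Ioi 0)) (nhds (kRat α x y z)) := by
  have habcd : 0 < (x + y + z) * (-x + y + z) * (x - y + z) * (x + y - z) := by
    have e1 : (x + y + z) * (-x + y + z) * (x - y + z) * (x + y - z) =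
        4 * x ^ 2 * y ^ 2 - (x ^ 2 + y ^ 2 - z ^ 2) ^ 2 := by ring
    have e2 : ((|x| + |y|) ^ 2 - z ^ 2) * (z ^ 2 - (|x| - |y|) ^ 2) =
        4 * |x| ^ 2 * |y| ^ 2 - (|x| ^ 2 + |y| ^ 2 - z ^ 2) ^ 2 := by ring
    have e3 : 4 * |x| ^ 2 * |y| ^ 2 - (|x| ^ 2 + |y| ^ 2 - z ^ 2) ^ 2 =
        4 * x ^ 2 * y ^ 2 - (x ^ 2 + y ^ 2 - z ^ 2) ^ 2 := by
      rw [sq_abs, sq_abs]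
    have hA : z ^ 2 < (|x| + |y|) ^ 2 := by
      nlinarith [mul_self_lt_mul_self (abs_nonneg z) h2, sq_abs z]
    have hB : (|x| - |y|) ^ 2 < z ^ 2 := by
      nlinarith [mul_self_lt_mul_self (abs_nonneg (|x| - |y|)) h1, sq_abs z,
        sq_abs (|x| - |y|)]
    calc (0:ℝ) < ((|x| + |y|) ^ 2 - z ^ 2) * (z ^ 2 - (|x| - |y|) ^ 2) :=
          mul_pos (by linarith) (by linarith)
      _ = _ := by rw [e2, e3, ← e1]
  have hQne : 2 * x * (2 * y) * (2 * z) ≠ 0 :=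
    mul_ne_zero (mul_ne_zero (mul_ne_zero two_ne_zero hx) (mul_ne_zero two_ne_zero hy))
      (mul_ne_zero two_ne_zero hz)
  have hsa := tendsto_sinh_div (x + y + z)
  have hsb := tendsto_sinh_div (-x + y + z)
  have hsc := tendsto_sinh_div (x - y + z)
  have hsd := tendsto_sinh_div (x + y - z)
  have hsX := tendsto_sinh_div (2 * x)
  have hsY := tendsto_sinh_div (2 * y)
  have hsZ := tendsto_sinh_div (2 * z)
  have hexp : Tendsto (fun ε : ℝ => Real.exp (ε * (x + y - z)))
      (nhdsWithin 0 (Set.Ioi 0)) (nhds 1) := by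
    have hc : Continuous fun ε : ℝ => Real.exp (ε * (x + y - z)) := by continuity
    simpa using (hc.tendsto 0).mono_left nhdsWithin_le_nhds
  have hPr : Tendsto (fun ε : ℝ =>
      (Real.sinh (ε * (x + y + z)) / ε * (Real.sinh (ε * (-x + y + z)) / ε) *
        (Real.sinh (ε * (x - y + z)) / ε) * (Real.sinh (ε * (x + y - z)) / ε)) ^ (α - 1/2))
      (nhdsWithin 0 (Set.Ioi 0))
      (nhds (((x + y + z) * (-x + y + z) * (x - y + z) * (x + y - z)) ^ (α - 1/2))) :=
    ((((hsa.mul hsb).mul hsc).mul hsd)).rpow_const (Or.inl habcd.ne')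
  have hQ : Tendsto (fun ε : ℝ => Real.sinh (ε * (2 * x)) / ε *
      (Real.sinh (ε * (2 * y)) / ε) * (Real.sinh (ε * (2 * z)) / ε))
      (nhdsWithin 0 (Set.Ioi 0)) (nhds (2 * x * (2 * y) * (2 * z))) :=
    (hsX.mul hsY).mul hsZ
  have hQa : Tendsto (fun ε : ℝ => |Real.sinh (ε * (2 * x)) / ε *
      (Real.sinh (ε * (2 * y)) / ε) * (Real.sinh (ε * (2 * z)) / ε)| ^ (2 * α))
      (nhdsWithin 0 (Set.Ioi 0)) (nhds (|2 * x * (2 * y) * (2 * z)| ^ (2 * α))) :=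
    hQ.abs.rpow_const (Or.inl (abs_ne_zero.mpr hQne))
  have hQAne : |2 * x * (2 * y) * (2 * z)| ^ (2 * α) ≠ 0 :=
    (Real.rpow_pos_of_pos (abs_pos.mpr hQne) _).ne'
  have hRat : Tendsto (fun ε : ℝ =>
      Real.sinh (ε * (x + y + z)) / ε * (Real.sinh (ε * (-x + y + z)) / ε) *
        (Real.sinh (ε * (x - y + z)) / ε) /
        (Real.sinh (ε * (2 * x)) / ε * (Real.sinh (ε * (2 * y)) / ε) *
          (Real.sinh (ε * (2 * z)) / ε)))
      (nhdsWithin 0 (Set.Ioi 0))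
      (nhds ((x + y + z) * (-x + y + z) * (x - y + z) / (2 * x * (2 * y) * (2 * z)))) :=
    (((hsa.mul hsb).mul hsc)).div hQ hQne
  have hF : Tendsto (fun ε : ℝ =>
      (2 : ℝ) ^ (4 * α + 2) * Malpha α * Real.exp (ε * (x + y - z)) *
        (Real.sinh (ε * (x + y + z)) / ε * (Real.sinh (ε * (-x + y + z)) / ε) *
          (Real.sinh (ε * (x - y + z)) / ε) * (Real.sinh (ε * (x + y - z)) / ε)) ^ (α - 1/2) /
        |Real.sinh (ε * (2 * x)) / ε * (Real.sinh (ε * (2 * y)) / ε) *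
          (Real.sinh (ε * (2 * z)) / ε)| ^ (2 * α) *
        (Real.sinh (ε * (x + y + z)) / ε * (Real.sinh (ε * (-x + y + z)) / ε) *
          (Real.sinh (ε * (x - y + z)) / ε) /
          (Real.sinh (ε * (2 * x)) / ε * (Real.sinh (ε * (2 * y)) / ε) *
            (Real.sinh (ε * (2 * z)) / ε))))
      (nhdsWithin 0 (Set.Ioi 0))
      (nhds ((2 : ℝ) ^ (4 * α + 2) * Malpha α * 1 *
        (((x + y + z) * (-x + y + z) * (x - y + z) * (x + y - z)) ^ (α - 1/2)) /
        (|2 * x * (2 * y) * (2 * z)| ^ (2 * α)) *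
        ((x + y + z) * (-x + y + z) * (x - y + z) / (2 * x * (2 * y) * (2 * z))))) :=
    (((tendsto_const_nhds.mul hexp).mul hPr).div hQa hQAne).mul hRat
  have hV : (2 : ℝ) ^ (4 * α + 2) * Malpha α * 1 *
      (((x + y + z) * (-x + y + z) * (x - y + z) * (x + y - z)) ^ (α - 1/2)) /
      (|2 * x * (2 * y) * (2 * z)| ^ (2 * α)) *
      ((x + y + z) * (-x + y + z) * (x - y + z) / (2 * x * (2 * y) * (2 * z))) =
      kRat α x y z := by
    have hxyz : x * y * z ≠ 0 := mul_ne_zero (mul_ne_zero hx hy) hz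
    have h8 : (8 : ℝ) = (2 : ℝ) ^ ((3 : ℕ) : ℝ) := by
      rw [Real.rpow_natCast]; norm_num
    have h8r : (8 : ℝ) ^ (2 * α) = (2 : ℝ) ^ (6 * α) := by
      rw [h8, ← Real.rpow_mul (by norm_num : (0:ℝ) ≤ 2)]
      congr 1
      push_cast
      ring
    have h2r : (2 : ℝ) ^ (4 * α + 2) = (2 : ℝ) ^ (-2 * α - 1) * (2 : ℝ) ^ (6 * α) * 8 := by
      rw [h8, ← Real.rpow_add (by norm_num : (0:ℝ) < 2), ← Real.rpow_add (by norm_num : (0:ℝ) < 2)]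
      congr 1
      push_cast
      ring
    have hT2 : (2 : ℝ) ^ (6 * α) ≠ 0 := (Real.rpow_pos_of_pos (by norm_num) _).ne'
    have hAabs : |x * y * z| ^ (2 * α) ≠ 0 :=
      (Real.rpow_pos_of_pos (abs_pos.mpr hxyz) _).ne'
    simp only [kRat]
    rw [show (2:ℝ) * x * (2 * y) * (2 * z) = 8 * (x * y * z) from by ring, abs_mul,
      show |(8:ℝ)| = 8 from by norm_num,
      Real.mul_rpow (by norm_num : (0:ℝ) ≤ 8) (abs_nonneg _), h8r, h2r]
    field_simp
  rw [← hV]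
  refine Tendsto.congr' ?_ hF
  filter_upwards [self_mem_nhdsWithin] with ε hε
  exact (scaled_eq α hε hx hy hz habcd).symm
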